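/- Let u be a continuous function on the closed unit ball B ⊆ ℝⁿ such that there exist points p, q ∈ B and a radius ρ > 0 with B_ρ(p) ⊆ {u > 0} ∩ B and B_ρ(q) ⊆ {u < 0} ∩ B. Then the zero set Z(u) = {x ∈ B : u(x) = 0} has (n-1)-dimensional Hausdorff measure at least c(n) ρ^{n-1} for a dimensional constant c(n) > 0. -/

import Mathlib

open MeasureTheory Metric Set
open scoped NNReal ENNReal Pointwise

/-- Lower bound for the Hausdorff measure of a Euclidean ball. -/
lemma euclidean_ball_hausdorff_lower (m : ℕ) :
    ∃ c : ℝ, 0 < c ∧ ∀ ρ : ℝ, 0 < ρ →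
      ENNReal.ofReal (c * ρ ^ m) ≤
        μH[(m : ℝ)] (Metric.ball (0 : EuclideanSpace ℝ (Fin m)) ρ) := by
  set s : ℝ := Real.sqrt m with hs
  have hs0 : 0 ≤ s := Real.sqrt_nonneg _
  refine ⟨(2 / (s + 1)) ^ m, pow_pos (by positivity) _, fun ρ hρ => ?_⟩
  set ρ' : ℝ := ρ / (s + 1) with hρ'def
  have hρ' : 0 < ρ' := by positivity
  -- the identity map from the sup-norm pi space to Euclidean space
  set L : EuclideanSpace ℝ (Fin m) → (Fin m → ℝ) := ⇑(WithLp.equiv 2 (Fin m → ℝ)) with hL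
  have hLip : LipschitzWith 1 L := PiLp.lipschitzWith_ofLp 2 _
  have hanti : AntilipschitzWith 1 (⇑(WithLp.equiv 2 (Fin m → ℝ)).symm) :=
    hLip.to_rightInverse (WithLp.equiv 2 (Fin m → ℝ)).right_inv
  have hd : (0:ℝ) ≤ (m:ℝ) := by positivity
  have key := hanti.le_hausdorffMeasure_image hd (Metric.ball (0 : Fin m → ℝ) ρ')
  -- the image of the small sup-ball is inside the Euclidean ball
  have himg : (⇑(WithLp.equiv 2 (Fin m → ℝ)).symm) '' Metric.ball (0 : Fin m → ℝ) ρ'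
      ⊆ Metric.ball (0 : EuclideanSpace ℝ (Fin m)) ρ := by
    rintro _ ⟨x, hx, rfl⟩
    rw [Metric.mem_ball, dist_zero_right] at hx ⊢
    have hanti2 : AntilipschitzWith ((Fintype.card (Fin m) : ℝ≥0) ^ (1 / (2:ℝ≥0∞)).toReal)
        ⇑(WithLp.equiv 2 (Fin m → ℝ)) := PiLp.antilipschitzWith_ofLp 2 (fun _ : Fin m => ℝ)
    have hC : ((Fintype.card (Fin m) : ℝ≥0) ^ (1 / (2:ℝ≥0∞)).toReal : ℝ≥0) = s.toNNReal := by
      ext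
      simp only [NNReal.coe_rpow, NNReal.coe_natCast, Fintype.card_fin]
      rw [Real.coe_toNNReal _ hs0, hs, Real.sqrt_eq_rpow]
      norm_num
    have hdd := hanti2.le_mul_dist ((WithLp.equiv 2 (Fin m → ℝ)).symm x) 0
    simp only [Equiv.apply_symm_apply, hC] at hdd
    have h0 : (WithLp.equiv 2 (Fin m → ℝ)) 0 = 0 := rfl
    rw [h0, dist_zero_right, dist_zero_right] at hdd
    calc ‖(WithLp.equiv 2 (Fin m → ℝ)).symm x‖ ≤ s.toNNReal * ‖x‖ := hdd
      _ ≤ s * ρ' := by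
          rw [Real.coe_toNNReal _ hs0]
          exact mul_le_mul_of_nonneg_left hx.le hs0
      _ < ρ := by
          have he : s * ρ' = s / (s + 1) * ρ := by rw [hρ'def]; ring
          have hlt : s / (s + 1) < 1 := (div_lt_one (by positivity)).2 (by linarith)
          rw [he]
          nlinarith
  have hvol : μH[(m:ℝ)] (Metric.ball (0 : Fin m → ℝ) ρ') = ENNReal.ofReal ((2 * ρ') ^ m) := by
    have := hausdorffMeasure_pi_real (ι := Fin m)
    simp only [Fintype.card_fin] at this
    rw [this, Real.volume_pi_ball _ hρ']
    simp [Fintype.card_fin]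
  calc ENNReal.ofReal ((2 / (s + 1)) ^ m * ρ ^ m)
      = ENNReal.ofReal ((2 * ρ') ^ m) := by
        congr 1
        rw [hρ'def, ← mul_pow]
        ring
    _ = μH[(m:ℝ)] (Metric.ball (0 : Fin m → ℝ) ρ') := hvol.symm
    _ ≤ (1 : ℝ≥0∞) ^ (m:ℝ) *
        μH[(m:ℝ)] ((⇑(WithLp.equiv 2 (Fin m → ℝ)).symm) '' Metric.ball (0 : Fin m → ℝ) ρ') := by
        simpa using key
    _ ≤ μH[(m:ℝ)] (Metric.ball (0 : EuclideanSpace ℝ (Fin m)) ρ) := by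
        rw [ENNReal.one_rpow, one_mul]
        exact measure_mono himg

theorem zero_set_measure_of_sign_balls (n : ℕ) (hn : 1 ≤ n) :
    ∃ c > 0, ∀ (u : EuclideanSpace ℝ (Fin n) → ℝ)
      (p q : EuclideanSpace ℝ (Fin n)) (ρ : ℝ),
      ContinuousOn u (Metric.closedBall 0 1) →
      p ∈ Metric.closedBall 0 1 → q ∈ Metric.closedBall 0 1 → 0 < ρ →
      Metric.ball p ρ ⊆ {x | 0 < u x} ∩ Metric.closedBall 0 1 →
      Metric.ball q ρ ⊆ {x | u x < 0} ∩ Metric.closedBall 0 1 →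
      ENNReal.ofReal (c * ρ^(n-1)) ≤
        Measure.hausdorffMeasure ((n:ℝ) - 1)
          {x | x ∈ Metric.closedBall (0 : EuclideanSpace ℝ (Fin n)) 1 ∧ u x = 0} := by
  obtain ⟨c, hc, hball⟩ := euclidean_ball_hausdorff_lower (n - 1)
  refine ⟨c, hc, fun u p q ρ hu hp hq hρ hpos hneg => ?_⟩
  set Z : Set (EuclideanSpace ℝ (Fin n)) :=
    {x | x ∈ Metric.closedBall (0 : EuclideanSpace ℝ (Fin n)) 1 ∧ u x = 0} with hZ
  set d : ℝ := (n : ℝ) - 1 with hd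
  have hd0 : (0:ℝ) ≤ d := by
    rw [hd]; simp only [sub_nonneg]; exact_mod_cast hn
  have hdm : ((n - 1 : ℕ) : ℝ) = d := by
    rw [hd]; push_cast [hn]; ring
  -- p ≠ q
  have hup : 0 < u p := (hpos (Metric.mem_ball_self hρ)).1
  have huq : u q < 0 := (hneg (Metric.mem_ball_self hρ)).1
  have hv : q - p ≠ 0 := by
    intro h
    rw [sub_eq_zero] at h
    subst h
    exact absurd hup (not_lt.2 huq.le)
  set v : EuclideanSpace ℝ (Fin n) := q - p with hvdef
  set K : Submodule ℝ (EuclideanSpace ℝ (Fin n)) := (ℝ ∙ v)ᗮ with hK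
  have hfr : Module.finrank ℝ K = n - 1 := by
    have h1 := Submodule.finrank_add_finrank_orthogonal (K := (ℝ ∙ v))
    rw [finrank_span_singleton hv, finrank_euclideanSpace_fin] at h1
    rw [hK]
    omega
  set P := K.orthogonalProjectionOnto with hP
  have hPlip : LipschitzWith 1 (⇑P) := by
    refine LipschitzWith.of_dist_le_mul fun x y => ?_
    simp only [NNReal.coe_one, one_mul, dist_eq_norm, ← map_sub]
    calc ‖P (x - y)‖ ≤ ‖(P : EuclideanSpace ℝ (Fin n) →L[ℝ] K)‖ * ‖x - y‖ :=
          (P : EuclideanSpace ℝ (Fin n) →L[ℝ] K).le_opNorm _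
      _ ≤ 1 * ‖x - y‖ :=
          mul_le_mul_of_nonneg_right (Submodule.orthogonalProjectionOnto_norm_le K) (norm_nonneg _)
      _ = ‖x - y‖ := one_mul _
  have hPv : P v = 0 :=
    Submodule.orthogonalProjectionOnto_apply_of_mem_orthogonal
      ((ℝ ∙ v).le_orthogonal_orthogonal (Submodule.mem_span_singleton_self v))
  -- every translated point of the (n-1)-ball is in the projection of Z
  have hsub : (fun w : K => P p + w) '' Metric.ball (0 : K) ρ ⊆ (⇑P) '' Z := by
    rintro _ ⟨w, hw, rfl⟩
    rw [Metric.mem_ball, dist_zero_right] at hw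
    have hnw : ‖(↑w : EuclideanSpace ℝ (Fin n))‖ = ‖w‖ := rfl
    have hpw : (p + ↑w : EuclideanSpace ℝ (Fin n)) ∈ Metric.ball p ρ := by
      rw [Metric.mem_ball, dist_eq_norm, add_sub_cancel_left, hnw]
      exact hw
    have hqw : (q + ↑w : EuclideanSpace ℝ (Fin n)) ∈ Metric.ball q ρ := by
      rw [Metric.mem_ball, dist_eq_norm, add_sub_cancel_left, hnw]
      exact hw
    have hpw' := hpos hpw
    have hqw' := hneg hqw
    -- the segment and IVT
    set γ : ℝ → EuclideanSpace ℝ (Fin n) := fun t => p + ↑w + t • v with hγ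
    have hmaps : ∀ t ∈ Set.Icc (0:ℝ) 1, γ t ∈ Metric.closedBall (0 : EuclideanSpace ℝ (Fin n)) 1 := by
      intro t ht
      have heq : γ t = (1 - t) • (p + ↑w) + t • (q + ↑w) := by
        rw [hγ, hvdef]
        simp only [smul_sub, sub_smul, smul_add, one_smul]
        abel
      rw [heq]
      exact (convex_closedBall (0 : EuclideanSpace ℝ (Fin n)) 1) hpw'.2 hqw'.2
        (by linarith [ht.2]) ht.1 (by ring)
    have hcont : ContinuousOn (u ∘ γ) (Set.Icc (0:ℝ) 1) := by
      refine hu.comp ?_ hmaps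
      exact (Continuous.continuousOn (by fun_prop))
    have h0 : (u ∘ γ) 1 ≤ 0 := by
      have hγ1 : γ 1 = q + ↑w := by rw [hγ, hvdef]; simp only [one_smul]; abel
      simp only [Function.comp_apply, hγ1]
      exact hqw'.1.le
    have h1 : 0 ≤ (u ∘ γ) 0 := by
      have hγ0 : γ 0 = p + ↑w := by rw [hγ]; simp
      simp only [Function.comp_apply, hγ0]
      exact hpw'.1.le
    obtain ⟨t, ht, hgt⟩ := intermediate_value_Icc' zero_le_one hcont ⟨h0, h1⟩
    refine ⟨γ t, ⟨hmaps t ht, hgt⟩, ?_⟩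
    rw [hγ]
    simp only [map_add, _root_.map_smul, hPv, smul_zero, add_zero, hP,
      Submodule.orthogonalProjectionOnto_mem_subspace_eq_self]
    rw [← hP, hPv, smul_zero, add_zero]
  -- chain of measure estimates
  have e1 : μH[d] ((⇑P) '' Z) ≤ μH[d] Z := by
    have := hPlip.hausdorffMeasure_image_le hd0 Z
    simpa using this
  have e2 : μH[d] ((fun w : K => P p + w) '' Metric.ball (0 : K) ρ)
      = μH[d] (Metric.ball (0 : K) ρ) := by
    have himg : (fun w : K => P p + w) '' Metric.ball (0 : K) ρ
        = (P p) +ᵥ Metric.ball (0 : K) ρ := rfl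
    rw [himg]
    exact hausdorffMeasure_vadd _ (Or.inl hd0) _
  -- transfer the ball in K to the standard Euclidean space
  have e3 : μH[d] (Metric.ball (0 : K) ρ)
      = μH[d] (Metric.ball (0 : EuclideanSpace ℝ (Fin (n-1))) ρ) := by
    set φ := ((stdOrthonormalBasis ℝ K).reindex (finCongr hfr)).repr with hφ
    have hiso : Isometry ⇑φ := φ.isometry
    have himg := hiso.hausdorffMeasure_image (Or.inl hd0) (Metric.ball (0 : K) ρ)
    rw [← himg]
    congr 1
    have hb : ⇑φ '' Metric.ball (0 : K) ρ = Metric.ball (φ 0) ρ :=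
      φ.toIsometryEquiv.image_ball 0 ρ
    rw [hb, map_zero]
  have e4 := hball ρ hρ
  rw [hdm] at e4
  calc ENNReal.ofReal (c * ρ ^ (n-1))
      ≤ μH[d] (Metric.ball (0 : EuclideanSpace ℝ (Fin (n-1))) ρ) := e4
    _ = μH[d] (Metric.ball (0 : K) ρ) := e3.symm
    _ = μH[d] ((fun w : K => P p + w) '' Metric.ball (0 : K) ρ) := e2.symm
    _ ≤ μH[d] ((⇑P) '' Z) := measure_mono hsub
    _ ≤ μH[d] Z := e1
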